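/- arXiv:2102.11435 — 4 statements merged into one kernel-verified Lean document; each statement's English description precedes it below -/
import Mathlib

section
/- Consider the 2-level firefighter problem on a forest of stars: finite disjoint sets L₁ (roots) and L₂ (leaves), a parent function p : L₂ → L₁, weights w : L₂ → ℕ, and budgets k₁, k₂ ∈ ℕ. Suppose there exist nonnegative reals (y_v)_{v ∈ L₁ ∪ L₂} with ∑_{u∈L₁} y_u ≤ k₁ - 2, ∑_{v∈L₂} y_v ≤ k₂, y_{p(v)} + y_v ≤ 1 for all v ∈ L₂, and ∑_{v∈L₂} w(v)·(y_{p(v)} + y_v) ≥ m. Then there exist T₁ ⊆ L₁ and T₂ ⊆ L₂ with |T₁| ≤ k₁, |T₂| ≤ k₂, and ∑ { w(v) : v ∈ L₂, v ∈ T₂ or p(v) ∈ T₁ } ≥ m. -/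
open scoped Classical
open scoped Classical
open Finset

lemma topk {α : Type*} [Fintype α] (w : α → ℕ) :
    ∀ (k : ℕ) (S : Finset α) (g : α → ℝ),
      (∀ v ∈ S, 0 ≤ g v) → (∀ v ∈ S, g v ≤ 1) → (∑ v ∈ S, g v ≤ (k : ℝ)) →
      ∃ T, T ⊆ S ∧ T.card ≤ k ∧ ∑ v ∈ S, (w v : ℝ) * g v ≤ ∑ v ∈ T, (w v : ℝ) := by
  intro k
  induction k with
  | zero =>
      intro S g hg0 hg1 hsum
      refine ⟨∅, empty_subset _, le_refl _, ?_⟩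
      have hz : ∀ v ∈ S, g v = 0 := by
        refine (Finset.sum_eq_zero_iff_of_nonneg hg0).mp ?_
        exact le_antisymm (by simpa using hsum) (Finset.sum_nonneg hg0)
      have : ∑ v ∈ S, (w v : ℝ) * g v = 0 :=
        Finset.sum_eq_zero (by intro v hv; rw [hz v hv, mul_zero])
      simp [this]
  | succ k ih =>
      intro S g hg0 hg1 hsum
      rcases S.eq_empty_or_nonempty with rfl | hS
      · exact ⟨∅, empty_subset _, Nat.zero_le _, by simp⟩
      obtain ⟨vs, hvsS, hvsmax⟩ := S.exists_max_image (fun v => (w v : ℝ)) hS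
      set S' := S.erase vs with hS'def
      have hsplit : (w vs : ℝ) * g vs + ∑ v ∈ S', (w v : ℝ) * g v
          = ∑ v ∈ S, (w v : ℝ) * g v := by
        rw [hS'def]; exact Finset.add_sum_erase S (fun v => (w v : ℝ) * g v) hvsS
      have hgsplit : g vs + ∑ v ∈ S', g v = ∑ v ∈ S, g v := by
        rw [hS'def]; exact Finset.add_sum_erase S g hvsS
      have hw0 : (0:ℝ) ≤ w vs := Nat.cast_nonneg _
      by_cases hc : ∑ v ∈ S', g v ≤ (k : ℝ)
      · obtain ⟨T', hT'S, hT'c, hT'⟩ := ih S' g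
          (fun v hv => hg0 v (mem_of_mem_erase hv))
          (fun v hv => hg1 v (mem_of_mem_erase hv)) hc
        have hvsT' : vs ∉ T' := fun h => (notMem_erase vs S) (hT'S h)
        refine ⟨insert vs T', ?_, ?_, ?_⟩
        · exact insert_subset hvsS (hT'S.trans (erase_subset _ _))
        · simpa [Finset.card_insert_of_notMem hvsT'] using Nat.succ_le_succ hT'c
        · rw [Finset.sum_insert hvsT', ← hsplit]
          have h1 : (w vs : ℝ) * g vs ≤ w vs := by
            nlinarith [hg1 vs hvsS, hg0 vs hvsS]
          linarith
      · push_neg at hc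
        set σ := ∑ v ∈ S', g v with hσdef
        have hσpos : (0:ℝ) < σ := lt_of_le_of_lt (Nat.cast_nonneg k) hc
        set c := (k : ℝ) / σ with hcdef
        have hc0 : 0 ≤ c := div_nonneg (Nat.cast_nonneg k) hσpos.le
        have hc1 : c ≤ 1 := by
          rw [hcdef, div_le_one hσpos]; exact hc.le
        obtain ⟨T', hT'S, hT'c, hT'⟩ := ih S' (fun v => c * g v)
          (fun v hv => mul_nonneg hc0 (hg0 v (mem_of_mem_erase hv)))
          (fun v hv => by
            have h1 := hg1 v (mem_of_mem_erase hv)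
            have h2 := hg0 v (mem_of_mem_erase hv)
            have := mul_le_mul hc1 h1 h2 zero_le_one
            simpa using this)
          (by
            rw [← Finset.mul_sum, ← hσdef, hcdef, div_mul_cancel₀]
            exact hσpos.ne')
        have hvsT' : vs ∉ T' := fun h => (notMem_erase vs S) (hT'S h)
        refine ⟨insert vs T', ?_, ?_, ?_⟩
        · exact insert_subset hvsS (hT'S.trans (erase_subset _ _))
        · simpa [Finset.card_insert_of_notMem hvsT'] using Nat.succ_le_succ hT'c
        · rw [Finset.sum_insert hvsT', ← hsplit]
          have hb : ∑ v ∈ S', (w v : ℝ) * g v ≤ (w vs : ℝ) * σ := by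
            rw [hσdef, Finset.mul_sum]
            refine Finset.sum_le_sum ?_
            intro v hv
            exact mul_le_mul_of_nonneg_right (hvsmax v (mem_of_mem_erase hv))
              (hg0 v (mem_of_mem_erase hv))
          have hkey : (1 - c) * ∑ v ∈ S', (w v : ℝ) * g v ≤ (1 - c) * ((w vs : ℝ) * σ) :=
            mul_le_mul_of_nonneg_left hb (by linarith)
          have hceq : (1 - c) * σ = σ - (k:ℝ) := by
            rw [hcdef]; field_simp
          have hsum' : g vs + σ ≤ (k:ℝ) + 1 := by
            rw [hσdef, hgsplit]; push_cast at hsum ⊢; linarith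
          have hslack : (1 - c) * σ ≤ 1 - g vs := by rw [hceq]; linarith
          have hcg : ∑ v ∈ S', (w v : ℝ) * (c * g v) ≤ ∑ v ∈ T', (w v : ℝ) := hT'
          have hexp : ∑ v ∈ S', (w v : ℝ) * g v
              = ∑ v ∈ S', (w v : ℝ) * (c * g v) + (1 - c) * ∑ v ∈ S', (w v : ℝ) * g v := by
            rw [Finset.mul_sum, ← Finset.sum_add_distrib]
            refine Finset.sum_congr rfl ?_
            intro v hv; ring
          nlinarith [hg0 vs hvsS, hg1 vs hvsS]

lemma sum_sq_expand {ι : Type*} [Fintype ι] (f d : ι → ℝ) (e : ℝ) :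
    ∑ i, (f i + e * d i)^2
      = ∑ i, (f i)^2 + e * (2 * ∑ i, f i * d i) + e^2 * ∑ i, (d i)^2 := by
  have h : ∀ i : ι, (f i + e * d i)^2
      = (f i)^2 + e * (2 * (f i * d i)) + e^2 * (d i)^2 := fun i => by ring
  rw [Finset.sum_congr rfl (fun i _ => h i), Finset.sum_add_distrib, Finset.sum_add_distrib,
    ← Finset.mul_sum, ← Finset.mul_sum, ← Finset.mul_sum]

lemma pert {L₁ L₂ : Type*} [Fintype L₁] [Fintype L₂]
    (p : L₂ → L₁) (w : L₂ → ℕ) (K₁ K₂ : ℝ) (a : L₁ → ℝ) (b : L₂ → ℝ)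
    (ha0 : ∀ u, 0 ≤ a u) (ha1 : ∀ u, a u ≤ 1) (hb0 : ∀ v, 0 ≤ b v)
    (hcap : ∀ v, a (p v) + b v ≤ 1)
    (hA : ∑ u, a u ≤ K₁) (hB : ∑ v, b v ≤ K₂)
    (hopt1 : ∀ (a' : L₁ → ℝ) (b' : L₂ → ℝ), (∀ u, 0 ≤ a' u) → (∀ u, a' u ≤ 1) →
      (∀ v, 0 ≤ b' v) → (∀ v, a' (p v) + b' v ≤ 1) → (∑ u, a' u ≤ K₁) → (∑ v, b' v ≤ K₂) →
      ∑ v, (w v : ℝ) * (a' (p v) + b' v) ≤ ∑ v, (w v : ℝ) * (a (p v) + b v))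
    (hopt2 : ∀ (a' : L₁ → ℝ) (b' : L₂ → ℝ), (∀ u, 0 ≤ a' u) → (∀ u, a' u ≤ 1) →
      (∀ v, 0 ≤ b' v) → (∀ v, a' (p v) + b' v ≤ 1) → (∑ u, a' u ≤ K₁) → (∑ v, b' v ≤ K₂) →
      ∑ v, (w v : ℝ) * (a (p v) + b v) ≤ ∑ v, (w v : ℝ) * (a' (p v) + b' v) →
      ∑ u, (a' u)^2 + ∑ v, (b' v)^2 ≤ ∑ u, (a u)^2 + ∑ v, (b v)^2) :
    (Finset.univ.filter (fun u => 0 < a u ∧ a u < 1)).card ≤ 2 := by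
  by_contra hcard
  push_neg at hcard
  obtain ⟨u₁, u₂, u₃, hm₁, hm₂, hm₃, h12, h13, h23⟩ := Finset.two_lt_card_iff.mp hcard
  have hf₁ : 0 < a u₁ ∧ a u₁ < 1 := (Finset.mem_filter.mp hm₁).2
  have hf₂ : 0 < a u₂ ∧ a u₂ < 1 := (Finset.mem_filter.mp hm₂).2
  have hf₃ : 0 < a u₃ ∧ a u₃ < 1 := (Finset.mem_filter.mp hm₃).2
  -- indicator of "leaf at cap"
  set ind : L₂ → ℝ := fun v => if b v = 1 - a (p v) then 1 else 0 with hind_def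
  have hind01 : ∀ v, ind v = 0 ∨ ind v = 1 := by
    intro v; by_cases h : b v = 1 - a (p v) <;> simp [hind_def, h]
  have hind_eq : ∀ v, ind v ≠ 0 → b v = 1 - a (p v) := by
    intro v h; by_contra hb; simp [hind_def, hb] at h
  -- counts of at-cap children
  set t₁ : ℝ := ∑ v, (if p v = u₁ then ind v else 0) with ht₁def
  set t₂ : ℝ := ∑ v, (if p v = u₂ then ind v else 0) with ht₂def
  set t₃ : ℝ := ∑ v, (if p v = u₃ then ind v else 0) with ht₃def
  set l₁ : ℝ := if t₁ = t₂ then 1 else t₂ - t₃ with hl₁def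
  set l₂ : ℝ := if t₁ = t₂ then -1 else t₃ - t₁ with hl₂def
  set l₃ : ℝ := if t₁ = t₂ then 0 else t₁ - t₂ with hl₃def
  have hlsum : l₁ + l₂ + l₃ = 0 := by
    by_cases ht : t₁ = t₂ <;> simp [hl₁def, hl₂def, hl₃def, ht] <;> ring
  have hlt : l₁ * t₁ + l₂ * t₂ + l₃ * t₃ = 0 := by
    by_cases ht : t₁ = t₂ <;> simp [hl₁def, hl₂def, hl₃def, ht] <;> ring
  have hlne : l₁ ≠ 0 ∨ l₃ ≠ 0 := by
    by_cases ht : t₁ = t₂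
    · left; simp [hl₁def, ht]
    · right; simp [hl₃def, ht]; exact sub_ne_zero_of_ne ht
  set Λ : ℝ := max |l₁| (max |l₂| |l₃|) with hΛdef
  have hΛ₁ : |l₁| ≤ Λ := le_max_left _ _
  have hΛ₂ : |l₂| ≤ Λ := le_trans (le_max_left _ _) (le_max_right _ _)
  have hΛ₃ : |l₃| ≤ Λ := le_trans (le_max_right _ _) (le_max_right _ _)
  have hΛpos : 0 < Λ := by
    rcases hlne with h | h
    · exact lt_of_lt_of_le (abs_pos.mpr h) hΛ₁
    · exact lt_of_lt_of_le (abs_pos.mpr h) hΛ₃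
  set μ₁ : ℝ := l₁ / Λ with hμ₁def
  set μ₂ : ℝ := l₂ / Λ with hμ₂def
  set μ₃ : ℝ := l₃ / Λ with hμ₃def
  have hμ₁abs : |μ₁| ≤ 1 := by
    rw [hμ₁def, abs_div, abs_of_pos hΛpos, div_le_one hΛpos]; exact hΛ₁
  have hμ₂abs : |μ₂| ≤ 1 := by
    rw [hμ₂def, abs_div, abs_of_pos hΛpos, div_le_one hΛpos]; exact hΛ₂
  have hμ₃abs : |μ₃| ≤ 1 := by
    rw [hμ₃def, abs_div, abs_of_pos hΛpos, div_le_one hΛpos]; exact hΛ₃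
  have hμsum : μ₁ + μ₂ + μ₃ = 0 := by
    rw [hμ₁def, hμ₂def, hμ₃def, ← add_div, ← add_div, hlsum, zero_div]
  have hμt : μ₁ * t₁ + μ₂ * t₂ + μ₃ * t₃ = 0 := by
    rw [hμ₁def, hμ₂def, hμ₃def, div_mul_eq_mul_div, div_mul_eq_mul_div, div_mul_eq_mul_div,
      ← add_div, ← add_div, hlt, zero_div]
  have hμne : μ₁ ≠ 0 ∨ μ₃ ≠ 0 := by
    rcases hlne with h | h
    · left; exact div_ne_zero h hΛpos.ne'
    · right; exact div_ne_zero h hΛpos.ne'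
  -- the perturbation direction
  set da : L₁ → ℝ := fun u => if u = u₁ then μ₁ else if u = u₂ then μ₂ else
    if u = u₃ then μ₃ else 0 with hda_def
  set db : L₂ → ℝ := fun v => -(da (p v)) * ind v with hdb_def
  have hda₁ : da u₁ = μ₁ := by simp [hda_def]
  have hda₂ : da u₂ = μ₂ := by simp [hda_def, h12.symm]
  have hda₃ : da u₃ = μ₃ := by simp [hda_def, h13.symm, h23.symm]
  have hda_mem : ∀ u, da u ≠ 0 → u = u₁ ∨ u = u₂ ∨ u = u₃ := by
    intro u h
    by_cases e1 : u = u₁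
    · exact Or.inl e1
    by_cases e2 : u = u₂
    · exact Or.inr (Or.inl e2)
    by_cases e3 : u = u₃
    · exact Or.inr (Or.inr e3)
    simp [hda_def, e1, e2, e3] at h
  have hdaabs : ∀ u, |da u| ≤ 1 := by
    intro u
    by_cases e1 : u = u₁
    · rw [e1, hda₁]; exact hμ₁abs
    by_cases e2 : u = u₂
    · rw [e2, hda₂]; exact hμ₂abs
    by_cases e3 : u = u₃
    · rw [e3, hda₃]; exact hμ₃abs
    simp [hda_def, e1, e2, e3]
  have hindabs : ∀ v, |ind v| ≤ 1 := by
    intro v; rcases hind01 v with h | h <;> simp [h]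
  have hdbabs : ∀ v, |db v| ≤ 1 := by
    intro v
    rw [hdb_def]
    calc |(-(da (p v))) * ind v| = |da (p v)| * |ind v| := by rw [abs_mul, abs_neg]
    _ ≤ 1 * 1 := mul_le_mul (hdaabs _) (hindabs _) (abs_nonneg _) zero_le_one
    _ = 1 := by ring
  -- sums of the direction vanish
  have hda_pt : ∀ u, da u = (if u = u₁ then μ₁ else 0) + (if u = u₂ then μ₂ else 0)
      + (if u = u₃ then μ₃ else 0) := by
    intro u
    by_cases e1 : u = u₁
    · subst e1; simp [hda_def, h12, h13]
    by_cases e2 : u = u₂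
    · subst e2; simp [hda_def, e1, h23]
    by_cases e3 : u = u₃
    · subst e3; simp [hda_def, e1, e2]
    simp [hda_def, e1, e2, e3]
  have hsumda : ∑ u, da u = 0 := by
    rw [Finset.sum_congr rfl (fun u _ => hda_pt u), Finset.sum_add_distrib,
      Finset.sum_add_distrib, Finset.sum_ite_eq' Finset.univ u₁ (fun _ => μ₁),
      Finset.sum_ite_eq' Finset.univ u₂ (fun _ => μ₂),
      Finset.sum_ite_eq' Finset.univ u₃ (fun _ => μ₃)]
    simpa using hμsum
  have hdb_pt : ∀ v, db v = -(μ₁ * (if p v = u₁ then ind v else 0)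
      + μ₂ * (if p v = u₂ then ind v else 0) + μ₃ * (if p v = u₃ then ind v else 0)) := by
    intro v
    simp only [hdb_def]
    by_cases e1 : p v = u₁
    · rw [if_pos e1, if_neg (fun h => h12 (e1.symm.trans h)),
        if_neg (fun h => h13 (e1.symm.trans h)), e1, hda₁]
      ring
    by_cases e2 : p v = u₂
    · rw [if_neg e1, if_pos e2, if_neg (fun h => h23 (e2.symm.trans h)), e2, hda₂]
      ring
    by_cases e3 : p v = u₃
    · rw [if_neg e1, if_neg e2, if_pos e3, e3, hda₃]
      ring
    · have h0 : da (p v) = 0 := by simp [hda_def, e1, e2, e3]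
      rw [if_neg e1, if_neg e2, if_neg e3, h0]
      ring
  have hsumdb : ∑ v, db v = 0 := by
    rw [Finset.sum_congr rfl (fun v _ => hdb_pt v)]
    have : ∀ v : L₂, -(μ₁ * (if p v = u₁ then ind v else 0)
        + μ₂ * (if p v = u₂ then ind v else 0) + μ₃ * (if p v = u₃ then ind v else 0))
        = -(μ₁ * (if p v = u₁ then ind v else 0)) + -(μ₂ * (if p v = u₂ then ind v else 0))
          + -(μ₃ * (if p v = u₃ then ind v else 0)) := fun v => by ring
    rw [Finset.sum_congr rfl (fun v _ => this v), Finset.sum_add_distrib,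
      Finset.sum_add_distrib]
    have n1 : ∑ v : L₂, -(μ₁ * (if p v = u₁ then ind v else 0)) = -(μ₁ * t₁) := by
      rw [ht₁def, Finset.mul_sum, ← Finset.sum_neg_distrib]
    have n2 : ∑ v : L₂, -(μ₂ * (if p v = u₂ then ind v else 0)) = -(μ₂ * t₂) := by
      rw [ht₂def, Finset.mul_sum, ← Finset.sum_neg_distrib]
    have n3 : ∑ v : L₂, -(μ₃ * (if p v = u₃ then ind v else 0)) = -(μ₃ * t₃) := by
      rw [ht₃def, Finset.mul_sum, ← Finset.sum_neg_distrib]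
    rw [n1, n2, n3]
    rw [show -(μ₁ * t₁) + -(μ₂ * t₂) + -(μ₃ * t₃) = -(μ₁ * t₁ + μ₂ * t₂ + μ₃ * t₃) by ring,
      hμt, neg_zero]
  -- epsilon
  set r : ℝ := min (min (a u₁) (1 - a u₁)) (min (min (a u₂) (1 - a u₂)) (min (a u₃) (1 - a u₃)))
    with hrdef
  have hrpos : 0 < r := by
    refine lt_min (lt_min hf₁.1 (by linarith [hf₁.2])) (lt_min (lt_min hf₂.1 (by linarith [hf₂.2]))
      (lt_min hf₃.1 (by linarith [hf₃.2])))
  set sl : L₂ → ℝ := fun v => if ind v = 1 ∨ da (p v) = 0 then (1:ℝ) else 1 - a (p v) - b v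
    with hsldef
  have hslpos : ∀ v, 0 < sl v := by
    intro v
    by_cases h : ind v = 1 ∨ da (p v) = 0
    · simp [hsldef, h]
    · push_neg at h
      have hne : b v ≠ 1 - a (p v) := by
        intro heq
        exact h.1 (by simp [hind_def, heq])
      have hlt : a (p v) + b v < 1 := lt_of_le_of_ne (hcap v) (fun heq => hne (by linarith))
      have : sl v = 1 - a (p v) - b v := by
        simp only [hsldef]
        rw [if_neg (by push_neg; exact h)]
      rw [this]; linarith
  have hFne : (insert (1:ℝ) (Finset.univ.image sl)).Nonempty := ⟨1, Finset.mem_insert_self _ _⟩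
  set εl : ℝ := (insert (1:ℝ) (Finset.univ.image sl)).min' hFne with hεldef
  have hεlpos : 0 < εl := by
    have hmem := (insert (1:ℝ) (Finset.univ.image sl)).min'_mem hFne
    rw [← hεldef] at hmem
    rcases Finset.mem_insert.mp hmem with h | h
    · rw [h]; exact zero_lt_one
    · obtain ⟨v, _, hv⟩ := Finset.mem_image.mp h
      rw [← hv]; exact hslpos v
  have hεl_le : ∀ v, εl ≤ sl v := fun v =>
    Finset.min'_le _ _ (Finset.mem_insert_of_mem (Finset.mem_image_of_mem sl (Finset.mem_univ v)))
  set ε : ℝ := min r εl with hεdef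
  have hεpos : 0 < ε := lt_min hrpos hεlpos
  have hεr : ε ≤ r := min_le_left _ _
  have hεle : ε ≤ εl := min_le_right _ _
  have hda_eps : ∀ u, da u ≠ 0 → ε ≤ a u ∧ ε ≤ 1 - a u := by
    intro u h
    rcases hda_mem u h with rfl | rfl | rfl
    · constructor
      · exact hεr.trans ((min_le_left _ _).trans (min_le_left _ _))
      · exact hεr.trans ((min_le_left _ _).trans (min_le_right _ _))
    · constructor
      · exact hεr.trans ((min_le_right _ _).trans ((min_le_left _ _).trans (min_le_left _ _)))
      · exact hεr.trans ((min_le_right _ _).trans ((min_le_left _ _).trans (min_le_right _ _)))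
    · constructor
      · exact hεr.trans ((min_le_right _ _).trans ((min_le_right _ _).trans (min_le_left _ _)))
      · exact hεr.trans ((min_le_right _ _).trans ((min_le_right _ _).trans (min_le_right _ _)))
  -- feasibility of the perturbed solutions
  have hfeas : ∀ e : ℝ, |e| ≤ ε →
      (∀ u, 0 ≤ a u + e * da u) ∧ (∀ u, a u + e * da u ≤ 1) ∧
      (∀ v, 0 ≤ b v + e * db v) ∧ (∀ v, (a (p v) + e * da (p v)) + (b v + e * db v) ≤ 1) ∧
      (∑ u, (a u + e * da u) ≤ K₁) ∧ (∑ v, (b v + e * db v) ≤ K₂) := by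
    intro e he
    have heabs : ∀ x : ℝ, |x| ≤ 1 → |e * x| ≤ ε := by
      intro x hx
      rw [abs_mul]
      calc |e| * |x| ≤ ε * 1 := mul_le_mul he hx (abs_nonneg _) hεpos.le
      _ = ε := by ring
    refine ⟨?_, ?_, ?_, ?_, ?_, ?_⟩
    · intro u
      by_cases hd : da u = 0
      · simp [hd]; exact ha0 u
      · have h1 := (hda_eps u hd).1
        have h2 := heabs (da u) (hdaabs u)
        have := neg_abs_le (e * da u)
        linarith
    · intro u
      by_cases hd : da u = 0
      · simp [hd]; exact ha1 u
      · have h1 := (hda_eps u hd).2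
        have h2 := heabs (da u) (hdaabs u)
        have := le_abs_self (e * da u)
        linarith
    · intro v
      by_cases hd : db v = 0
      · simp [hd]; exact hb0 v
      · have hdne : da (p v) ≠ 0 := by
          intro h0; apply hd; simp [hdb_def, h0]
        have hine : ind v ≠ 0 := by
          intro h0; apply hd; simp [hdb_def, h0]
        have hbv : b v = 1 - a (p v) := hind_eq v hine
        have h1 := (hda_eps _ hdne).2
        have h2 := heabs (db v) (hdbabs v)
        have := neg_abs_le (e * db v)
        rw [hbv]
        linarith
    · intro v
      rcases hind01 v with hiv | hiv
      · -- not at cap: db v = 0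
        have hdbv : db v = 0 := by simp [hdb_def, hiv]
        rw [hdbv]
        by_cases hd : da (p v) = 0
        · rw [hd]; simpa using hcap v
        · have hsl : sl v = 1 - a (p v) - b v := by
            simp only [hsldef]
            rw [if_neg (by push_neg; exact ⟨by rw [hiv]; norm_num, hd⟩)]
          have h2 := heabs (da (p v)) (hdaabs _)
          have h3 : ε ≤ 1 - a (p v) - b v := by
            rw [← hsl]; exact hεle.trans (hεl_le v)
          have := le_abs_self (e * da (p v))
          linarith
      · -- at cap: perturbation cancels
        have hbv : b v = 1 - a (p v) := by
          apply hind_eq v; rw [hiv]; norm_num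
        have hdbv : db v = -(da (p v)) := by
          simp [hdb_def, hiv]
        rw [hdbv, hbv]
        ring_nf
        linarith [le_refl (1:ℝ)]
    · rw [Finset.sum_add_distrib, ← Finset.mul_sum, hsumda, mul_zero, add_zero]
      exact hA
    · rw [Finset.sum_add_distrib, ← Finset.mul_sum, hsumdb, mul_zero, add_zero]
      exact hB
  -- value is linear in e
  set V₀ : ℝ := ∑ v, (w v : ℝ) * (a (p v) + b v) with hV₀def
  set D : ℝ := ∑ v, (w v : ℝ) * (da (p v) + db v) with hDdef
  have hlinV : ∀ e : ℝ, ∑ v, (w v : ℝ) * ((a (p v) + e * da (p v)) + (b v + e * db v))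
      = V₀ + e * D := by
    intro e
    rw [hV₀def, hDdef, Finset.mul_sum, ← Finset.sum_add_distrib]
    exact Finset.sum_congr rfl (fun v _ => by ring)
  -- apply optimality at e = ε and e = -ε
  have habs_of : ∀ e : ℝ, e = ε ∨ e = -ε → |e| ≤ ε := by
    intro e h; rcases h with rfl | rfl
    · rw [abs_of_pos hεpos]
    · rw [abs_neg, abs_of_pos hεpos]
  have hVle : ∀ e : ℝ, e = ε ∨ e = -ε → V₀ + e * D ≤ V₀ := by
    intro e he
    obtain ⟨c1, c2, c3, c4, c5, c6⟩ := hfeas e (habs_of e he)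
    have := hopt1 (fun u => a u + e * da u) (fun v => b v + e * db v) c1 c2 c3 c4 c5 c6
    rw [hlinV e] at this
    exact this
  have hD0 : D = 0 := by
    have h1 := hVle ε (Or.inl rfl)
    have h2 := hVle (-ε) (Or.inr rfl)
    rw [neg_mul] at h2
    have hle : ε * D ≤ 0 := by linarith
    have hge : 0 ≤ ε * D := by linarith
    have h0 : ε * D = 0 := le_antisymm hle hge
    rcases mul_eq_zero.mp h0 with h | h
    · exact absurd h hεpos.ne'
    · exact h
  have hWle : ∀ e : ℝ, e = ε ∨ e = -ε →
      ∑ u, (a u + e * da u)^2 + ∑ v, (b v + e * db v)^2 ≤ ∑ u, (a u)^2 + ∑ v, (b v)^2 := by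
    intro e he
    obtain ⟨c1, c2, c3, c4, c5, c6⟩ := hfeas e (habs_of e he)
    refine hopt2 (fun u => a u + e * da u) (fun v => b v + e * db v) c1 c2 c3 c4 c5 c6 ?_
    rw [hlinV e, hD0, mul_zero, add_zero]
  set C : ℝ := ∑ u, a u * da u + ∑ v, b v * db v with hCdef
  set Q : ℝ := ∑ u, (da u)^2 + ∑ v, (db v)^2 with hQdef
  have hquad : ∀ e : ℝ, ∑ u, (a u + e * da u)^2 + ∑ v, (b v + e * db v)^2
      = (∑ u, (a u)^2 + ∑ v, (b v)^2) + e * (2 * C) + e^2 * Q := by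
    intro e
    rw [sum_sq_expand a da e, sum_sq_expand b db e, hCdef, hQdef]
    ring
  have hε2pos : 0 < ε^2 := by positivity
  have hQ0 : Q ≤ 0 := by
    have h1 := hWle ε (Or.inl rfl)
    have h2 := hWle (-ε) (Or.inr rfl)
    rw [hquad ε] at h1
    rw [hquad (-ε), neg_pow, neg_mul] at h2
    have hsq : (-1:ℝ)^2 * ε^2 = ε^2 := by norm_num
    rw [hsq] at h2
    have hQsum : ε^2 * Q ≤ 0 := by linarith
    by_contra hq
    push_neg at hq
    have : 0 < ε^2 * Q := mul_pos hε2pos hq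
    linarith
  have hQpos : 0 < Q := by
    have hsq1 : ∀ u : L₁, (0:ℝ) ≤ (da u)^2 := fun u => sq_nonneg _
    have hsq2 : ∀ v : L₂, (0:ℝ) ≤ (db v)^2 := fun v => sq_nonneg _
    have hb2 : (0:ℝ) ≤ ∑ v, (db v)^2 := Finset.sum_nonneg (fun v _ => hsq2 v)
    rcases hμne with h | h
    · have : (da u₁)^2 ≤ ∑ u, (da u)^2 :=
        Finset.single_le_sum (fun u _ => hsq1 u) (Finset.mem_univ u₁)
      have hpos : 0 < (da u₁)^2 := by rw [hda₁]; positivity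
      rw [hQdef]; linarith
    · have : (da u₃)^2 ≤ ∑ u, (da u)^2 :=
        Finset.single_le_sum (fun u _ => hsq1 u) (Finset.mem_univ u₃)
      have hpos : 0 < (da u₃)^2 := by rw [hda₃]; positivity
      rw [hQdef]; linarith
  linarith


theorem stmt_4 {L₁ L₂ : Type*} [Fintype L₁] [Fintype L₂]
    (p : L₂ → L₁) (w : L₂ → ℕ) (k₁ k₂ : ℕ) (m : ℝ)
    (y₁ : L₁ → ℝ) (y₂ : L₂ → ℝ)
    (hy₁ : ∀ u, 0 ≤ y₁ u) (hy₂ : ∀ v, 0 ≤ y₂ v)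
    (hb₁ : ∑ u, y₁ u ≤ (k₁ : ℝ) - 2)
    (hb₂ : ∑ v, y₂ v ≤ (k₂ : ℝ))
    (hcap : ∀ v, y₁ (p v) + y₂ v ≤ 1)
    (hval : ∑ v, (w v : ℝ) * (y₁ (p v) + y₂ v) ≥ m) :
    ∃ (T₁ : Finset L₁) (T₂ : Finset L₂),
      T₁.card ≤ k₁ ∧ T₂.card ≤ k₂ ∧
      (m : ℝ) ≤ ∑ v ∈ Finset.univ.filter (fun v => v ∈ T₂ ∨ p v ∈ T₁), (w v : ℝ) := by
  -- the feasible polytope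
  set P : Set ((L₁ → ℝ) × (L₂ → ℝ)) := {z | (∀ u, 0 ≤ z.1 u) ∧ (∀ u, z.1 u ≤ 1) ∧
    (∀ v, 0 ≤ z.2 v) ∧ (∀ v, z.1 (p v) + z.2 v ≤ 1) ∧
    (∑ u, z.1 u ≤ (k₁ : ℝ) - 2) ∧ (∑ v, z.2 v ≤ (k₂ : ℝ))} with hPdef
  set V : ((L₁ → ℝ) × (L₂ → ℝ)) → ℝ := fun z => ∑ v, (w v : ℝ) * (z.1 (p v) + z.2 v) with hVdef
  set Wf : ((L₁ → ℝ) × (L₂ → ℝ)) → ℝ := fun z => ∑ u, (z.1 u)^2 + ∑ v, (z.2 v)^2 with hWdef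
  -- the clamped starting point
  set z₀ : (L₁ → ℝ) × (L₂ → ℝ) := (fun u => min (y₁ u) 1, y₂) with hz₀def
  have hz₀P : z₀ ∈ P := by
    refine ⟨fun u => le_min (hy₁ u) zero_le_one, fun u => min_le_right _ _, hy₂, ?_, ?_, hb₂⟩
    · intro v
      calc min (y₁ (p v)) 1 + y₂ v ≤ y₁ (p v) + y₂ v := by
            have := min_le_left (y₁ (p v)) 1; linarith
      _ ≤ 1 := hcap v
    · calc ∑ u, min (y₁ u) 1 ≤ ∑ u, y₁ u :=
            Finset.sum_le_sum (fun u _ => min_le_left _ _)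
      _ ≤ (k₁ : ℝ) - 2 := hb₁
  have hmz₀ : m ≤ V z₀ := by
    have : V z₀ = ∑ v, (w v : ℝ) * (y₁ (p v) + y₂ v) := by
      refine Finset.sum_congr rfl (fun v _ => ?_)
      have h1 : y₁ (p v) ≤ 1 := by have := hcap v; have := hy₂ v; linarith
      simp [hz₀def, min_eq_left h1]
    rw [this]; exact hval
  -- continuity
  have hVcont : Continuous V := by
    apply continuous_finset_sum
    intro v _
    exact continuous_const.mul
      (((continuous_apply (p v)).comp continuous_fst).add
        ((continuous_apply v).comp continuous_snd))
  have hWcont : Continuous Wf := by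
    apply Continuous.add
    · apply continuous_finset_sum
      intro u _
      exact ((continuous_apply u).comp continuous_fst).pow 2
    · apply continuous_finset_sum
      intro v _
      exact ((continuous_apply v).comp continuous_snd).pow 2
  -- P is compact
  have hPclosed : IsClosed P := by
    have c1 : IsClosed {z : (L₁ → ℝ) × (L₂ → ℝ) | ∀ u, 0 ≤ z.1 u} := by
      have : {z : (L₁ → ℝ) × (L₂ → ℝ) | ∀ u, 0 ≤ z.1 u}
          = ⋂ u, {z : (L₁ → ℝ) × (L₂ → ℝ) | 0 ≤ z.1 u} := by ext z; simp
      rw [this]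
      exact isClosed_iInter (fun u =>
        isClosed_le continuous_const ((continuous_apply u).comp continuous_fst))
    have c2 : IsClosed {z : (L₁ → ℝ) × (L₂ → ℝ) | ∀ u, z.1 u ≤ 1} := by
      have : {z : (L₁ → ℝ) × (L₂ → ℝ) | ∀ u, z.1 u ≤ 1}
          = ⋂ u, {z : (L₁ → ℝ) × (L₂ → ℝ) | z.1 u ≤ 1} := by ext z; simp
      rw [this]
      exact isClosed_iInter (fun u =>
        isClosed_le ((continuous_apply u).comp continuous_fst) continuous_const)
    have c3 : IsClosed {z : (L₁ → ℝ) × (L₂ → ℝ) | ∀ v, 0 ≤ z.2 v} := by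
      have : {z : (L₁ → ℝ) × (L₂ → ℝ) | ∀ v, 0 ≤ z.2 v}
          = ⋂ v, {z : (L₁ → ℝ) × (L₂ → ℝ) | 0 ≤ z.2 v} := by ext z; simp
      rw [this]
      exact isClosed_iInter (fun v =>
        isClosed_le continuous_const ((continuous_apply v).comp continuous_snd))
    have c4 : IsClosed {z : (L₁ → ℝ) × (L₂ → ℝ) | ∀ v, z.1 (p v) + z.2 v ≤ 1} := by
      have : {z : (L₁ → ℝ) × (L₂ → ℝ) | ∀ v, z.1 (p v) + z.2 v ≤ 1}
          = ⋂ v, {z : (L₁ → ℝ) × (L₂ → ℝ) | z.1 (p v) + z.2 v ≤ 1} := by ext z; simp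
      rw [this]
      exact isClosed_iInter (fun v =>
        isClosed_le (((continuous_apply (p v)).comp continuous_fst).add
          ((continuous_apply v).comp continuous_snd)) continuous_const)
    have c5 : IsClosed {z : (L₁ → ℝ) × (L₂ → ℝ) | ∑ u, z.1 u ≤ (k₁ : ℝ) - 2} :=
      isClosed_le (continuous_finset_sum _ (fun u _ =>
        (continuous_apply u).comp continuous_fst)) continuous_const
    have c6 : IsClosed {z : (L₁ → ℝ) × (L₂ → ℝ) | ∑ v, z.2 v ≤ (k₂ : ℝ)} :=
      isClosed_le (continuous_finset_sum _ (fun v _ =>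
        (continuous_apply v).comp continuous_snd)) continuous_const
    have : P = {z : (L₁ → ℝ) × (L₂ → ℝ) | ∀ u, 0 ≤ z.1 u}
        ∩ ({z | ∀ u, z.1 u ≤ 1} ∩ ({z | ∀ v, 0 ≤ z.2 v}
        ∩ ({z | ∀ v, z.1 (p v) + z.2 v ≤ 1}
        ∩ ({z | ∑ u, z.1 u ≤ (k₁ : ℝ) - 2} ∩ {z | ∑ v, z.2 v ≤ (k₂ : ℝ)})))) := by
      ext z
      simp only [hPdef, Set.mem_setOf_eq, Set.mem_inter_iff, and_assoc]
    rw [this]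
    exact c1.inter (c2.inter (c3.inter (c4.inter (c5.inter c6))))
  have hPsub : P ⊆ Set.Icc ((fun _ => 0, fun _ => 0) : (L₁ → ℝ) × (L₂ → ℝ))
      ((fun _ => 1, fun _ => 1)) := by
    rintro z ⟨h1, h2, h3, h4, h5, h6⟩
    constructor
    · exact ⟨fun u => h1 u, fun v => h3 v⟩
    · refine ⟨fun u => h2 u, fun v => ?_⟩
      have := h4 v
      have := h1 (p v)
      simpa using by linarith
  have hPcomp : IsCompact P := IsCompact.of_isClosed_subset isCompact_Icc hPclosed hPsub
  -- maximize V over P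
  obtain ⟨z₁, hz₁P, hz₁max⟩ := hPcomp.exists_isMaxOn ⟨z₀, hz₀P⟩ hVcont.continuousOn
  have hz₁max' : ∀ z ∈ P, V z ≤ V z₁ := fun z hz => hz₁max hz
  -- maximize Wf over the optimal face
  set F : Set ((L₁ → ℝ) × (L₂ → ℝ)) := P ∩ {z | V z₁ ≤ V z} with hFdef
  have hFclosed : IsClosed F := hPclosed.inter (isClosed_le continuous_const hVcont)
  have hFcomp : IsCompact F :=
    IsCompact.of_isClosed_subset hPcomp hFclosed Set.inter_subset_left
  have hFne : F.Nonempty := ⟨z₁, hz₁P, show V z₁ ≤ V z₁ from le_refl _⟩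
  obtain ⟨z₂, hz₂F, hz₂max⟩ := hFcomp.exists_isMaxOn hFne hWcont.continuousOn
  obtain ⟨hz₂P, hz₂V⟩ := hz₂F
  have hz₂Veq : V z₂ = V z₁ := le_antisymm (hz₁max' z₂ hz₂P) hz₂V
  obtain ⟨p1, p2, p3, p4, p5, p6⟩ := hz₂P
  -- at most two fractional root coordinates
  have hfrac : (Finset.univ.filter (fun u => 0 < z₂.1 u ∧ z₂.1 u < 1)).card ≤ 2 := by
    apply pert p w ((k₁ : ℝ) - 2) (k₂ : ℝ) z₂.1 z₂.2 p1 p2 p3 p4 p5 p6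
    · intro a' b' c1 c2 c3 c4 c5 c6
      have hmem : ((a', b') : (L₁ → ℝ) × (L₂ → ℝ)) ∈ P := ⟨c1, c2, c3, c4, c5, c6⟩
      have := hz₁max' _ hmem
      rw [← hz₂Veq] at this
      exact this
    · intro a' b' c1 c2 c3 c4 c5 c6 hVge
      have hmem : ((a', b') : (L₁ → ℝ) × (L₂ → ℝ)) ∈ F := by
        refine ⟨⟨c1, c2, c3, c4, c5, c6⟩, ?_⟩
        rw [Set.mem_setOf_eq, ← hz₂Veq]
        exact hVge
      exact hz₂max hmem
  -- the root set
  set T₁ : Finset L₁ := Finset.univ.filter (fun u => 0 < z₂.1 u) with hT₁def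
  have hT₁card : T₁.card ≤ k₁ := by
    set Fone : Finset L₁ := Finset.univ.filter (fun u => z₂.1 u = 1) with hFonedef
    have hsub : T₁ ⊆ (Finset.univ.filter (fun u => 0 < z₂.1 u ∧ z₂.1 u < 1)) ∪ Fone := by
      intro u hu
      have h0 : 0 < z₂.1 u := (Finset.mem_filter.mp hu).2
      rcases lt_or_eq_of_le (p2 u) with h | h
      · exact Finset.mem_union_left _ (Finset.mem_filter.mpr ⟨Finset.mem_univ _, h0, h⟩)
      · exact Finset.mem_union_right _ (Finset.mem_filter.mpr ⟨Finset.mem_univ _, h⟩)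
    have hcard1 : (Fone.card : ℝ) ≤ (k₁ : ℝ) - 2 := by
      have heq : (Fone.card : ℝ) = ∑ u ∈ Fone, z₂.1 u := by
        rw [Finset.sum_congr rfl (fun u hu => (Finset.mem_filter.mp hu).2)]
        simp [hFonedef]
      have hle : ∑ u ∈ Fone, z₂.1 u ≤ ∑ u, z₂.1 u :=
        Finset.sum_le_sum_of_subset_of_nonneg (Finset.subset_univ _) (fun u _ _ => p1 u)
      linarith
    have hreal : (Fone.card : ℝ) + 2 ≤ (k₁ : ℝ) := by linarith
    have hcard1' : Fone.card + 2 ≤ k₁ := by exact_mod_cast hreal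
    calc T₁.card ≤ ((Finset.univ.filter (fun u => 0 < z₂.1 u ∧ z₂.1 u < 1)) ∪ Fone).card :=
          Finset.card_le_card hsub
    _ ≤ (Finset.univ.filter (fun u => 0 < z₂.1 u ∧ z₂.1 u < 1)).card + Fone.card :=
          Finset.card_union_le _ _
    _ ≤ 2 + Fone.card := by omega
    _ ≤ k₁ := by omega
  -- the leaf set via top-k rounding
  set S : Finset L₂ := Finset.univ.filter (fun v => p v ∉ T₁) with hSdef
  have hbS : ∑ v ∈ S, z₂.2 v ≤ (k₂ : ℝ) := by
    calc ∑ v ∈ S, z₂.2 v ≤ ∑ v, z₂.2 v :=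
        Finset.sum_le_sum_of_subset_of_nonneg (Finset.subset_univ _) (fun v _ _ => p3 v)
    _ ≤ (k₂ : ℝ) := p6
  obtain ⟨T₂, hT₂S, hT₂card, hT₂val⟩ := topk w k₂ S z₂.2 (fun v _ => p3 v)
    (fun v _ => by have := p4 v; have := p1 (p v); linarith) hbS
  refine ⟨T₁, T₂, hT₁card, hT₂card, ?_⟩
  -- final accounting
  have hmV₂ : m ≤ V z₂ := by
    rw [hz₂Veq]
    exact le_trans hmz₀ (hz₁max' z₀ hz₀P)
  have hVsplit : V z₂ = ∑ v ∈ Finset.univ.filter (fun v => p v ∈ T₁),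
      (w v : ℝ) * (z₂.1 (p v) + z₂.2 v) + ∑ v ∈ S, (w v : ℝ) * (z₂.1 (p v) + z₂.2 v) := by
    rw [hVdef, hSdef]
    exact (Finset.sum_filter_add_sum_filter_not Finset.univ _ _).symm
  have hin : ∑ v ∈ Finset.univ.filter (fun v => p v ∈ T₁),
      (w v : ℝ) * (z₂.1 (p v) + z₂.2 v) ≤ ∑ v ∈ Finset.univ.filter (fun v => p v ∈ T₁),
      (w v : ℝ) := by
    refine Finset.sum_le_sum (fun v _ => ?_)
    have h1 := p4 v
    have h2 : (0:ℝ) ≤ w v := Nat.cast_nonneg _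
    nlinarith
  have hout : ∑ v ∈ S, (w v : ℝ) * (z₂.1 (p v) + z₂.2 v) = ∑ v ∈ S, (w v : ℝ) * z₂.2 v := by
    refine Finset.sum_congr rfl (fun v hv => ?_)
    have hv' : v ∈ Finset.univ.filter (fun v => p v ∉ T₁) := by rw [← hSdef]; exact hv
    have hnot : p v ∉ T₁ := (Finset.mem_filter.mp hv').2
    have : ¬ (0 < z₂.1 (p v)) := fun h =>
      hnot (Finset.mem_filter.mpr ⟨Finset.mem_univ _, h⟩)
    have h0 : z₂.1 (p v) = 0 := le_antisymm (not_lt.mp this) (p1 (p v))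
    rw [h0, zero_add]
  have hUsum : ∑ v ∈ Finset.univ.filter (fun v => v ∈ T₂ ∨ p v ∈ T₁), (w v : ℝ)
      = ∑ v ∈ Finset.univ.filter (fun v => p v ∈ T₁), (w v : ℝ) + ∑ v ∈ T₂, (w v : ℝ) := by
    have hdisj : Disjoint (Finset.univ.filter (fun v => p v ∈ T₁)) T₂ := by
      rw [Finset.disjoint_left]
      intro v hv hvT₂
      have h1 : p v ∈ T₁ := (Finset.mem_filter.mp hv).2
      have h2 : p v ∉ T₁ := (Finset.mem_filter.mp (hT₂S hvT₂)).2
      exact h2 h1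
    have hUeq : Finset.univ.filter (fun v => v ∈ T₂ ∨ p v ∈ T₁)
        = (Finset.univ.filter (fun v => p v ∈ T₁)) ∪ T₂ := by
      ext v
      constructor
      · intro h
        rcases (Finset.mem_filter.mp h).2 with h' | h'
        · exact Finset.mem_union_right _ h'
        · exact Finset.mem_union_left _ (Finset.mem_filter.mpr ⟨Finset.mem_univ _, h'⟩)
      · intro h
        rcases Finset.mem_union.mp h with h' | h'
        · exact Finset.mem_filter.mpr ⟨Finset.mem_univ _, Or.inr (Finset.mem_filter.mp h').2⟩
        · exact Finset.mem_filter.mpr ⟨Finset.mem_univ _, Or.inl h'⟩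
    rw [hUeq, Finset.sum_union hdisj]
  rw [hUsum]
  have := hT₂val
  linarith [hmV₂, hVsplit ▸ hmV₂, hin, hout ▸ le_refl (∑ v ∈ S, (w v : ℝ) * (z₂.1 (p v) + z₂.2 v))]
end

section
/- Any basic feasible solution (vertex) of the polytope { y ≥ 0 : ∑_{u∈L₁} y_u ≤ k₁, ∑_{v∈L₂} y_v ≤ k₂, y_{p(v)} + y_v ≤ 1 for all v ∈ L₂ } has at most 2 loose variables, where y_v is loose if 0 < y_v < 1 and, in case v ∈ L₂, additionally y_{p(v)} = 0. -/
open scoped Classical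
open Filter Topology

section
variable {L₁ L₂ : Type*} (p : L₂ → L₁) (y : (L₁ ⊕ L₂) → ℝ)

noncomputable def unitDir : (L₁ ⊕ L₂) → (L₁ ⊕ L₂) → ℝ
  | Sum.inl u, Sum.inl u' => if u' = u then 1 else 0
  | Sum.inl u, Sum.inr v => if p v = u ∧ y (Sum.inl u) + y (Sum.inr v) = 1 then -1 else 0
  | Sum.inr w, j => if j = Sum.inr w then 1 else 0

end


lemma unitDir_self {L₁ L₂ : Type*} (p : L₂ → L₁) (y : (L₁ ⊕ L₂) → ℝ) (i : L₁ ⊕ L₂) :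
    unitDir p y i i = 1 := by
  cases i <;> simp [unitDir]

lemma unitDir_support {L₁ L₂ : Type*} {p : L₂ → L₁} {y : (L₁ ⊕ L₂) → ℝ} {i j : L₁ ⊕ L₂}
    (h : unitDir p y i j ≠ 0) :
    j = i ∨ ∃ v, j = Sum.inr v ∧ i = Sum.inl (p v) ∧
      y (Sum.inl (p v)) + y (Sum.inr v) = 1 := by
  cases i with
  | inl u =>
    cases j with
    | inl u' =>
      left
      simp only [unitDir, ne_eq, ite_eq_right_iff, Classical.not_imp] at h
      simp [h.1]
    | inr v =>
      right
      simp only [unitDir, ne_eq, ite_eq_right_iff, Classical.not_imp] at h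
      obtain ⟨⟨h1, h2⟩, -⟩ := h
      exact ⟨v, rfl, by rw [h1], by rw [h1]; exact h2⟩
  | inr w =>
    left
    simp only [unitDir, ne_eq, ite_eq_right_iff, Classical.not_imp] at h
    exact h.1

lemma unitDir_tight {L₁ L₂ : Type*} {p : L₂ → L₁} {y : (L₁ ⊕ L₂) → ℝ} {i : L₁ ⊕ L₂}
    (hi1 : y i < 1) (hi2 : ∀ w, i = Sum.inr w → y (Sum.inl (p w)) = 0)
    (v : L₂) (hv : y (Sum.inl (p v)) + y (Sum.inr v) = 1) :
    unitDir p y i (Sum.inl (p v)) + unitDir p y i (Sum.inr v) = 0 := by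
  cases i with
  | inl u =>
    by_cases h : p v = u
    · subst h
      simp [unitDir, hv]
    · simp [unitDir, h, Ne.symm h]
  | inr w =>
    have hvw : v ≠ w := by
      rintro rfl
      rw [hi2 v rfl, zero_add] at hv
      exact absurd hv (ne_of_lt hi1)
    simp [unitDir, hvw]

lemma unitDir_ne {L₁ L₂ : Type*} {p : L₂ → L₁} {y : (L₁ ⊕ L₂) → ℝ} {i i' : L₁ ⊕ L₂}
    (hi1 : y i' < 1) (hi2 : ∀ w, i' = Sum.inr w → y (Sum.inl (p w)) = 0)
    (hne : i' ≠ i) : unitDir p y i i' = 0 := by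
  by_contra h
  rcases unitDir_support h with h1 | ⟨v, rfl, rfl, htight⟩
  · exact hne h1
  · rw [hi2 v rfl, zero_add] at htight
    exact absurd htight (ne_of_lt hi1)

theorem stmt_5 {L₁ L₂ : Type*} [Fintype L₁] [Fintype L₂]
    (p : L₂ → L₁) (k₁ k₂ : ℕ)
    (P : Set ((L₁ ⊕ L₂) → ℝ))
    (hP : P = {y | (∀ i, 0 ≤ y i) ∧
        (∑ u, y (Sum.inl u)) ≤ (k₁ : ℝ) ∧
        (∑ v, y (Sum.inr v)) ≤ (k₂ : ℝ) ∧
        ∀ v : L₂, y (Sum.inl (p v)) + y (Sum.inr v) ≤ 1})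
    (y : (L₁ ⊕ L₂) → ℝ) (hy : y ∈ Set.extremePoints ℝ P) :
    ({i : L₁ ⊕ L₂ | (0 < y i ∧ y i < 1) ∧
        (∀ v : L₂, i = Sum.inr v → y (Sum.inl (p v)) = 0)}).ncard ≤ 2 := by
  by_contra hcard
  push_neg at hcard
  set S : Set (L₁ ⊕ L₂) := {i : L₁ ⊕ L₂ | (0 < y i ∧ y i < 1) ∧
      (∀ v : L₂, i = Sum.inr v → y (Sum.inl (p v)) = 0)} with hSdef
  obtain ⟨a, ha, b, hb, c, hc, hab, hac, hbc⟩ := (Set.two_lt_ncard (Set.toFinite S)).mp hcard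
  subst hP
  obtain ⟨hyP, hyext⟩ := hy
  obtain ⟨h0, hA, hB, hpair⟩ := hyP
  set I : Fin 3 → (L₁ ⊕ L₂) := ![a, b, c] with hI
  have hIS : ∀ j, I j ∈ S := by
    intro j
    fin_cases j
    exacts [ha, hb, hc]
  have hpos : ∀ j, 0 < y (I j) := fun j => (hIS j).1.1
  have hlt : ∀ j, y (I j) < 1 := fun j => (hIS j).1.2
  have hz : ∀ j, ∀ w, I j = Sum.inr w → y (Sum.inl (p w)) = 0 := fun j => (hIS j).2
  have hIinj : Function.Injective I := by
    intro j k h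
    fin_cases j <;> fin_cases k <;>
      first
        | rfl
        | exact absurd h (by assumption)
        | exact absurd h.symm (by assumption)
  -- the two "column sum" vectors
  set A : Fin 3 → ℝ := fun j => ∑ u, unitDir p y (I j) (Sum.inl u) with hAdef
  set B : Fin 3 → ℝ := fun j => ∑ v, unitDir p y (I j) (Sum.inr v) with hBdef
  let φ : (Fin 3 → ℝ) →ₗ[ℝ] ℝ × ℝ :=
    { toFun := fun t => (∑ j, t j * A j, ∑ j, t j * B j)
      map_add' := by
        intro s t
        simp [Prod.ext_iff, add_mul, Finset.sum_add_distrib]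
      map_smul' := by
        intro r t
        simp [Prod.ext_iff, Finset.mul_sum, mul_assoc] }
  have hninj : ¬ Function.Injective φ := by
    intro hinj
    have h1 := LinearMap.finrank_le_finrank_of_injective hinj
    simp [Module.finrank_prod] at h1
  obtain ⟨s₁, s₂, hs, hsne⟩ := Function.not_injective_iff.mp hninj
  set t : Fin 3 → ℝ := s₁ - s₂ with htdef
  have ht0 : t ≠ 0 := sub_ne_zero.mpr hsne
  have htker : φ t = 0 := by rw [htdef, map_sub, hs, sub_self]
  have htA : ∑ j, t j * A j = 0 := congrArg Prod.fst htker
  have htB : ∑ j, t j * B j = 0 := congrArg Prod.snd htker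
  set d : (L₁ ⊕ L₂) → ℝ := fun i => ∑ j, t j * unitDir p y (I j) i with hddef
  -- properties of d
  have hd_supp : ∀ i, d i ≠ 0 → 0 < y i := by
    intro i hi
    obtain ⟨j, -, hj⟩ := Finset.exists_ne_zero_of_sum_ne_zero hi
    have hg : unitDir p y (I j) i ≠ 0 := fun h => hj (by rw [h, mul_zero])
    rcases unitDir_support hg with rfl | ⟨v, rfl, hIe, htight⟩
    · exact hpos j
    · have h1 : y (Sum.inl (p v)) < 1 := by rw [← hIe]; exact hlt j
      linarith
  have hd_tight : ∀ v : L₂, y (Sum.inl (p v)) + y (Sum.inr v) = 1 →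
      d (Sum.inl (p v)) + d (Sum.inr v) = 0 := by
    intro v hv
    have h1 : d (Sum.inl (p v)) + d (Sum.inr v) =
        ∑ j, t j * (unitDir p y (I j) (Sum.inl (p v)) + unitDir p y (I j) (Sum.inr v)) := by
      rw [hddef]
      rw [← Finset.sum_add_distrib]
      exact Finset.sum_congr rfl fun j _ => (mul_add _ _ _).symm
    rw [h1]
    exact Finset.sum_eq_zero fun j _ => by
      rw [unitDir_tight (hlt j) (hz j) v hv, mul_zero]
  have hdA : ∑ u, d (Sum.inl u) = 0 := by
    rw [hddef]
    rw [Finset.sum_comm]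
    calc ∑ j, ∑ u, t j * unitDir p y (I j) (Sum.inl u)
        = ∑ j, t j * A j := by
          exact Finset.sum_congr rfl fun j _ => by rw [hAdef, Finset.mul_sum]
      _ = 0 := htA
  have hdB : ∑ v, d (Sum.inr v) = 0 := by
    rw [hddef]
    rw [Finset.sum_comm]
    calc ∑ j, ∑ v, t j * unitDir p y (I j) (Sum.inr v)
        = ∑ j, t j * B j := by
          exact Finset.sum_congr rfl fun j _ => by rw [hBdef, Finset.mul_sum]
      _ = 0 := htB
  obtain ⟨j₀, hj₀⟩ := Function.ne_iff.mp ht0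
  have hdI : d (I j₀) = t j₀ := by
    show (∑ j, t j * unitDir p y (I j) (I j₀)) = t j₀
    rw [Finset.sum_eq_single j₀]
    · rw [unitDir_self, mul_one]
    · intro k _ hk
      rw [unitDir_ne (hlt j₀) (hz j₀) (fun h => hk (hIinj h.symm)), mul_zero]
    · intro h; exact absurd (Finset.mem_univ j₀) h
  -- eventual membership lemma
  have key : ∀ e : (L₁ ⊕ L₂) → ℝ, (∀ i, e i ≠ 0 → 0 < y i) →
      (∀ v : L₂, y (Sum.inl (p v)) + y (Sum.inr v) = 1 →
        e (Sum.inl (p v)) + e (Sum.inr v) = 0) →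
      (∑ u, e (Sum.inl u) = 0) → (∑ v, e (Sum.inr v) = 0) →
      ∀ᶠ ε in 𝓝 (0:ℝ), (y + ε • e) ∈ {y : (L₁ ⊕ L₂) → ℝ | (∀ i, 0 ≤ y i) ∧
        (∑ u, y (Sum.inl u)) ≤ (k₁ : ℝ) ∧
        (∑ v, y (Sum.inr v)) ≤ (k₂ : ℝ) ∧
        ∀ v : L₂, y (Sum.inl (p v)) + y (Sum.inr v) ≤ 1} := by
    intro e hsupp htight heA heB
    have E1 : ∀ᶠ ε in 𝓝 (0:ℝ), ∀ i, 0 ≤ y i + ε * e i := by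
      rw [eventually_all]
      intro i
      rcases eq_or_ne (e i) 0 with h | h
      · exact Eventually.of_forall fun ε => by simp [h, h0 i]
      · have hcont : Tendsto (fun ε : ℝ => y i + ε * e i) (𝓝 0) (𝓝 (y i)) := by
          have hc : Continuous (fun ε : ℝ => y i + ε * e i) := by fun_prop
          simpa using hc.tendsto 0
        exact (hcont.eventually (eventually_gt_nhds (hsupp i h))).mono
          fun ε hε => le_of_lt hε
    have E2 : ∀ᶠ ε in 𝓝 (0:ℝ), ∀ v : L₂,
        (y (Sum.inl (p v)) + ε * e (Sum.inl (p v))) +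
          (y (Sum.inr v) + ε * e (Sum.inr v)) ≤ 1 := by
      rw [eventually_all]
      intro v
      rcases eq_or_lt_of_le (hpair v) with heq | hlt'
      · refine Eventually.of_forall fun ε => ?_
        have h2 : ε * e (Sum.inl (p v)) + ε * e (Sum.inr v) = 0 := by
          rw [← mul_add, htight v heq, mul_zero]
        linarith
      · have hcont : Tendsto (fun ε : ℝ =>
            (y (Sum.inl (p v)) + ε * e (Sum.inl (p v))) +
              (y (Sum.inr v) + ε * e (Sum.inr v))) (𝓝 0)
            (𝓝 (y (Sum.inl (p v)) + y (Sum.inr v))) := by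
          have hc : Continuous (fun ε : ℝ =>
              (y (Sum.inl (p v)) + ε * e (Sum.inl (p v))) +
                (y (Sum.inr v) + ε * e (Sum.inr v))) := by fun_prop
          simpa using hc.tendsto 0
        exact (hcont.eventually (eventually_lt_nhds hlt')).mono fun ε hε => le_of_lt hε
    filter_upwards [E1, E2] with ε h1 h2
    refine ⟨?_, ?_, ?_, ?_⟩
    · intro i
      simpa [Pi.add_apply, Pi.smul_apply, smul_eq_mul] using h1 i
    · have : ∑ u, (y + ε • e) (Sum.inl u) = ∑ u, y (Sum.inl u) := by
        simp only [Pi.add_apply, Pi.smul_apply, smul_eq_mul]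
        rw [Finset.sum_add_distrib, ← Finset.mul_sum, heA, mul_zero, add_zero]
      rw [this]; exact hA
    · have : ∑ v, (y + ε • e) (Sum.inr v) = ∑ v, y (Sum.inr v) := by
        simp only [Pi.add_apply, Pi.smul_apply, smul_eq_mul]
        rw [Finset.sum_add_distrib, ← Finset.mul_sum, heB, mul_zero, add_zero]
      rw [this]; exact hB
    · intro v
      simpa [Pi.add_apply, Pi.smul_apply, smul_eq_mul] using h2 v
  have hev1 := key d hd_supp hd_tight hdA hdB
  have hev2 := key (-d) (fun i hi => hd_supp i (fun h => hi (by simp [h])))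
    (fun v hv => by have := hd_tight v hv; simp only [Pi.neg_apply]; linarith)
    (by simp only [Pi.neg_apply, Finset.sum_neg_distrib, hdA, neg_zero])
    (by simp only [Pi.neg_apply, Finset.sum_neg_distrib, hdB, neg_zero])
  obtain ⟨ε, ⟨hm1, hm2⟩, hεpos⟩ :=
    (((hev1.and hev2).filter_mono nhdsWithin_le_nhds).and
      (self_mem_nhdsWithin (s := Set.Ioi (0:ℝ)))).exists
  have hseg : y ∈ openSegment ℝ (y + ε • d) (y + ε • (-d)) :=
    ⟨1/2, 1/2, by norm_num, by norm_num, by norm_num, by module⟩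
  have heq := hyext hm1 hm2 hseg
  have hεd : ε • d = 0 := by
    have := heq
    rwa [add_eq_left] at this
  rcases smul_eq_zero.mp hεd with h | h
  · exact absurd h (ne_of_gt hεpos)
  · have : d (I j₀) = 0 := congrFun h _
    rw [hdI] at this
    exact hj₀ this
end

section
/- Let L₁, L₂ be finite disjoint sets with parent map p : L₂ → L₁, weights w : L₂ → ℝ≥0, budget k₂ ∈ ℕ, and a feasible LP point y with ∑_{v∈L₂} y_v ≤ k₂ and 0 ≤ y_v, y_{p(v)} + y_v ≤ 1 for all v ∈ L₂. Let T₁ := { u ∈ L₁ : y_u > 0 }, U := { v ∈ L₂ : p(v) ∉ T₁ }, and let T₂ be a set of min(k₂,|U|) elements of U of largest weight. Then ∑_{v ∈ T₂} w(v) + ∑_{v ∈ L₂ \ U} w(v) ≥ ∑_{v ∈ L₂} w(v)·(y_{p(v)} + y_v). -/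
open scoped Classical

theorem stmt_6 {L₁ L₂ : Type*} [Fintype L₁] [Fintype L₂]
    (p : L₂ → L₁) (w : L₂ → ℝ) (hw : ∀ v, 0 ≤ w v) (k₂ : ℕ)
    (y₁ : L₁ → ℝ) (y₂ : L₂ → ℝ)
    (hy₂ : ∀ v, 0 ≤ y₂ v) (hy₁ : ∀ u, 0 ≤ y₁ u)
    (hb₂ : ∑ v, y₂ v ≤ (k₂ : ℝ))
    (hcap : ∀ v, y₁ (p v) + y₂ v ≤ 1)
    (T₁ : Finset L₁) (hT₁ : T₁ = Finset.univ.filter (fun u => 0 < y₁ u))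
    (U : Finset L₂) (hU : U = Finset.univ.filter (fun v => p v ∉ T₁))
    (T₂ : Finset L₂) (hT₂U : T₂ ⊆ U) (hT₂card : T₂.card = min k₂ U.card)
    (hT₂top : ∀ v ∈ T₂, ∀ v' ∈ U \ T₂, w v' ≤ w v) :
    ∑ v, w v * (y₁ (p v) + y₂ v) ≤ ∑ v ∈ T₂, w v + ∑ v ∈ Finset.univ \ U, w v := by
  have hy₂le1 : ∀ v, y₂ v ≤ 1 := fun v =>
    le_trans (le_add_of_nonneg_left (hy₁ (p v))) (hcap v)
  have hy₁U : ∀ v ∈ U, y₁ (p v) = 0 := by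
    intro v hv
    rw [hU, Finset.mem_filter] at hv
    rw [hT₁, Finset.mem_filter] at hv
    have := hv.2
    push_neg at this
    exact le_antisymm (this (Finset.mem_univ _)) (hy₁ _)
  -- split the total sum
  have hsplit : ∑ v, w v * (y₁ (p v) + y₂ v)
      = ∑ v ∈ U, w v * y₂ v + ∑ v ∈ Finset.univ \ U, w v * (y₁ (p v) + y₂ v) := by
    rw [← Finset.sum_sdiff (Finset.subset_univ U), add_comm]
    congr 1
    exact Finset.sum_congr rfl fun v hv => by rw [hy₁U v hv, zero_add]
  rw [hsplit]
  have h2 : ∑ v ∈ Finset.univ \ U, w v * (y₁ (p v) + y₂ v) ≤ ∑ v ∈ Finset.univ \ U, w v :=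
    Finset.sum_le_sum fun v _ => mul_le_of_le_one_right (hw v) (hcap v)
  have h1 : ∑ v ∈ U, w v * y₂ v ≤ ∑ v ∈ T₂, w v := by
    rcases le_or_gt U.card k₂ with h | h
    · -- T₂ = U
      have hTU : T₂ = U := Finset.eq_of_subset_of_card_le hT₂U
        (by rw [hT₂card, min_eq_right h])
      rw [hTU]
      exact Finset.sum_le_sum fun v _ => mul_le_of_le_one_right (hw v) (hy₂le1 v)
    · have hcard : T₂.card = k₂ := by rw [hT₂card, min_eq_left h.le]
      rcases Nat.eq_zero_or_pos k₂ with hk | hk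
      · subst hk
        have hz : ∀ v, y₂ v = 0 := by
          intro v
          by_contra hne
          have hpos : 0 < y₂ v := lt_of_le_of_ne (hy₂ v) (Ne.symm hne)
          have : 0 < ∑ v, y₂ v :=
            Finset.sum_pos' (fun i _ => hy₂ i) ⟨v, Finset.mem_univ v, hpos⟩
          simp at hb₂; linarith
        have hT₂e : T₂ = ∅ := Finset.card_eq_zero.mp hcard
        simp [hT₂e, hz]
      · have hne : T₂.Nonempty := Finset.card_pos.mp (by omega)
        set c := T₂.inf' hne w with hc
        have hcle : ∀ v ∈ T₂, c ≤ w v := fun v hv => Finset.inf'_le w hv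
        have hc0 : 0 ≤ c := Finset.le_inf' hne w fun v _ => hw v
        have hcge : ∀ v ∈ U \ T₂, w v ≤ c := by
          intro v hv
          exact Finset.le_inf' hne w fun u hu => hT₂top u hu v hv
        have hsumU : ∑ v ∈ U, y₂ v ≤ (k₂ : ℝ) :=
          le_trans (Finset.sum_le_sum_of_subset_of_nonneg (Finset.subset_univ U)
            (fun i _ _ => hy₂ i)) hb₂
        have hsd : ∑ v ∈ T₂, y₂ v + ∑ v ∈ U \ T₂, y₂ v = ∑ v ∈ U, y₂ v := by
          rw [← Finset.sum_sdiff hT₂U, add_comm]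
        have key : ∑ v ∈ U, w v * y₂ v
            ≤ ∑ v ∈ T₂, w v * y₂ v + c * ((k₂ : ℝ) - ∑ v ∈ T₂, y₂ v) := by
          rw [← Finset.sum_sdiff hT₂U]
          have : ∑ v ∈ U \ T₂, w v * y₂ v ≤ c * ∑ v ∈ U \ T₂, y₂ v := by
            rw [Finset.mul_sum]
            exact Finset.sum_le_sum fun v hv =>
              mul_le_mul_of_nonneg_right (hcge v hv) (hy₂ v)
          have h3 : ∑ v ∈ U \ T₂, y₂ v ≤ (k₂ : ℝ) - ∑ v ∈ T₂, y₂ v := by linarith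
          have h4 : c * ∑ v ∈ U \ T₂, y₂ v ≤ c * ((k₂ : ℝ) - ∑ v ∈ T₂, y₂ v) :=
            mul_le_mul_of_nonneg_left h3 hc0
          linarith
        have hck : c * (k₂ : ℝ) = ∑ v ∈ T₂, c := by
          rw [Finset.sum_const, hcard, nsmul_eq_mul, mul_comm]
        calc ∑ v ∈ U, w v * y₂ v
            ≤ ∑ v ∈ T₂, w v * y₂ v + c * ((k₂ : ℝ) - ∑ v ∈ T₂, y₂ v) := key
          _ = ∑ v ∈ T₂, (w v * y₂ v + c * (1 - y₂ v)) := by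
              rw [Finset.sum_add_distrib]
              congr 1
              rw [mul_sub, hck, Finset.mul_sum, ← Finset.sum_sub_distrib]
              exact Finset.sum_congr rfl fun v _ => by ring
          _ ≤ ∑ v ∈ T₂, w v := by
              refine Finset.sum_le_sum fun v hv => ?_
              have h1v : 1 - y₂ v ≥ 0 := by linarith [hy₂le1 v]
              nlinarith [hcle v hv, hy₂ v, hy₂le1 v, hw v]
  linarith
end

section
/- Let (X,d) be a finite metric space, r₁ > 0, Y ⊆ X with pairwise distances > 8r₁, and an integral solution (S₁,S₂) with |S₁| ≤ k₁, covering (with radii r₁ and r₂) at least m points of X. Write A := { f ∈ S₁ : d(f,Y) ≤ r₁ } and suppose |A| = |S₁| (i.e., B := S₁ \ A is empty). Define S'₁ := { y ∈ Y : d(y,A) ≤ r₁ }. Then |S'₁| ≤ k₁ and the solution (S'₁, S₂) with radii (2r₁, r₂) covers every point covered by (S₁,S₂) with radii (r₁,r₂); in particular it covers at least m points. -/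
open scoped Classical

theorem stmt_15 {X : Type*} [MetricSpace X] [Fintype X]
    (r₁ r₂ : ℝ) (hr₁ : 0 < r₁) (hr₂ : 0 ≤ r₂)
    (k₁ : ℕ) (m : ℕ)
    (Y : Finset X) (hsep : ∀ y ∈ Y, ∀ y' ∈ Y, y ≠ y' → dist y y' > 8 * r₁)
    (S₁ S₂ : Finset X) (hS₁ : S₁.card ≤ k₁)
    (hA : ∀ f ∈ S₁, ∃ y ∈ Y, dist f y ≤ r₁)
    (hm : m ≤ (Finset.univ.filter (fun x : X =>
        (∃ s ∈ S₁, dist x s ≤ r₁) ∨ (∃ s ∈ S₂, dist x s ≤ r₂))).card)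
    (S'₁ : Finset X) (hS'₁ : S'₁ = Y.filter (fun y => ∃ f ∈ S₁, dist y f ≤ r₁)) :
    S'₁.card ≤ k₁ ∧
    (∀ x : X, ((∃ s ∈ S₁, dist x s ≤ r₁) ∨ (∃ s ∈ S₂, dist x s ≤ r₂)) →
        ((∃ y ∈ S'₁, dist x y ≤ 2 * r₁) ∨ (∃ s ∈ S₂, dist x s ≤ r₂))) ∧
    m ≤ (Finset.univ.filter (fun x : X =>
        (∃ y ∈ S'₁, dist x y ≤ 2 * r₁) ∨ (∃ s ∈ S₂, dist x s ≤ r₂))).card := by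
  have hcov : ∀ x : X, ((∃ s ∈ S₁, dist x s ≤ r₁) ∨ (∃ s ∈ S₂, dist x s ≤ r₂)) →
      ((∃ y ∈ S'₁, dist x y ≤ 2 * r₁) ∨ (∃ s ∈ S₂, dist x s ≤ r₂)) := by
    intro x hx
    rcases hx with ⟨s, hs, hds⟩ | h2
    · left
      obtain ⟨y, hy, hdy⟩ := hA s hs
      refine ⟨y, ?_, ?_⟩
      · rw [hS'₁, Finset.mem_filter]
        exact ⟨hy, s, hs, by rw [dist_comm]; exact hdy⟩
      · calc dist x y ≤ dist x s + dist s y := dist_triangle _ _ _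
          _ ≤ r₁ + r₁ := add_le_add hds hdy
          _ = 2 * r₁ := by ring
    · exact Or.inr h2
  have hfun : ∀ y ∈ S'₁, ∃ f ∈ S₁, dist y f ≤ r₁ := by
    intro y hy
    rw [hS'₁, Finset.mem_filter] at hy
    exact hy.2
  choose g hg hgd using hfun
  have hcard : S'₁.card ≤ k₁ := by
    refine le_trans (Finset.card_le_card_of_injOn (fun y => if h : y ∈ S'₁ then g y h else y)
      (fun y hy => by have hy₀ : y ∈ S'₁ := hy; simp [hy₀]; exact hg y hy) ?_) hS₁
    intro y hy y' hy' heq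
    rw [Finset.mem_coe] at hy hy'
    simp only [dif_pos hy, dif_pos hy'] at heq
    by_contra hne
    have hyY : y ∈ Y := by rw [hS'₁] at hy; exact (Finset.mem_filter.mp hy).1
    have hy'Y : y' ∈ Y := by rw [hS'₁] at hy'; exact (Finset.mem_filter.mp hy').1
    have := hsep y hyY y' hy'Y hne
    have : dist y y' ≤ 2 * r₁ := by
      calc dist y y' ≤ dist y (g y hy) + dist (g y hy) y' := dist_triangle _ _ _
        _ ≤ r₁ + r₁ := by
            refine add_le_add (hgd y hy) ?_
            rw [heq, dist_comm]; exact hgd y' hy'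
        _ = 2 * r₁ := by ring
    linarith [hsep y hyY y' hy'Y hne]
  refine ⟨hcard, hcov, le_trans hm (Finset.card_le_card ?_)⟩
  intro x hx
  simp only [Finset.mem_filter, Finset.mem_univ, true_and] at hx ⊢
  exact hcov x hx
end
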